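/- Let P be an Mtk on a Polish metric space (X, ψ, B) with ψ bounded above by 1, satisfying (C1) with V̄: X → [1,∞), η' ∈ [0,1), L' ∈ [0,∞), and (C2) with γ' ∈ (0,1) and δ' > 0. Set L = L' + η'/2 − 1/2, λ = 2L'(1−η')/(2L'+δ') + η', J = (2L'+δ')/(1−η') + 2L'/λ, ρ^DM = exp(−(log λ · log γ')/(log J − log γ')), and r = (log(2L+1) − log λ)/(log(2L+1) − log λ − log γ'). Then: L' ≥ 1 − η' > 0; λ ∈ (η', 1) and J > 1; L ≥ 0; r lies in the interval (log(2L+1)/(log(2L+1) − log γ'), 1); ρ_r := max(γ'^r (2L+1)^{1−r}, λ^{1−r}) = λ^{1−r}; and ρ_r < ρ^DM. -/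

import Mathlib

open MeasureTheory ProbabilityTheory ENNReal Filter

/-- A coupling of two measures: a measure on the product with the given marginals. -/
def IsCoupling {X : Type*} [MeasurableSpace X] (υ : Measure (X × X)) (μ ν : Measure X) : Prop :=
  υ.map Prod.fst = μ ∧ υ.map Prod.snd = ν

/-- The `L₁`-Wasserstein divergence `W_ψ` induced by the metric `ψ = dist` of `X`. -/
noncomputable def wassDist {X : Type*} [MeasurableSpace X] [PseudoMetricSpace X]
    (μ ν : Measure X) : ℝ≥0∞ :=
  ⨅ (υ : Measure (X × X)) (_ : IsProbabilityMeasure υ) (_ : IsCoupling υ μ ν),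
    ∫⁻ p, ENNReal.ofReal (dist p.1 p.2) ∂υ

/-- The `n`-step evolution `μ Pⁿ` of a measure under a Markov transition kernel. -/
noncomputable def stepN {X : Type*} [MeasurableSpace X] (P : Kernel X X) :
    ℕ → Measure X → Measure X
  | 0, μ => μ
  | n + 1, μ => (stepN P n μ).bind (fun x => P x)

/-- Membership in `P_ψ(X)`: `∫ ψ(x,·) dμ < ∞` for some `x`. -/
def memPpsi {X : Type*} [MeasurableSpace X] [PseudoMetricSpace X] (μ : Measure X) : Prop :=
  ∃ x : X, ∫⁻ y, ENNReal.ofReal (dist x y) ∂μ < ⊤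

/-- Proposition 2 and its proof. Under (C1)-(C2) of Durmus and Moulines
(with the metric bounded by 1), the rate bound `ρ_r` from Corollary 1 with the indicated
choice of `r` is strictly smaller than the Durmus-Moulines rate `ρ^DM`. -/
theorem stmt14 {X : Type*} [MetricSpace X] [CompleteSpace X] [SecondCountableTopology X]
    [MeasurableSpace X] [BorelSpace X] [Nonempty X]
    (hψbdd : ∀ x y : X, dist x y ≤ 1)
    (P : Kernel X X) [IsMarkovKernel P]
    -- (C1)
    (Vbar : X → ℝ) (hVmeas : Measurable Vbar) (hV1 : ∀ x, 1 ≤ Vbar x)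
    (η' L' : ℝ) (hη'0 : 0 ≤ η') (hη'1 : η' < 1) (hL' : 0 ≤ L')
    (hC1int : ∀ x : X, Integrable Vbar (P x))
    (hC1 : ∀ x : X, (∫ y, Vbar y ∂(P x)) ≤ η' * Vbar x + L')
    -- (C2), with coupling set C' = {(x,y) : V̄(x) + V̄(y) ≤ (2L'+δ')/(1−η')}
    (γ' δ' : ℝ) (hγ'0 : 0 < γ') (hγ'1 : γ' < 1) (hδ' : 0 < δ')
    (hC2C : ∀ x y : X, Vbar x + Vbar y ≤ (2 * L' + δ') / (1 - η') →
      wassDist (P x) (P y) ≤ ENNReal.ofReal (γ' * dist x y))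
    (hC2Cc : ∀ x y : X, ¬(Vbar x + Vbar y ≤ (2 * L' + δ') / (1 - η')) →
      wassDist (P x) (P y) ≤ ENNReal.ofReal (dist x y))
    -- the derived quantities
    (L lam J ρDM r : ℝ)
    (hLdef : L = L' + η' / 2 - 1 / 2)
    (hlamdef : lam = 2 * L' * (1 - η') / (2 * L' + δ') + η')
    (hJdef : J = (2 * L' + δ') / (1 - η') + 2 * L' / lam)
    (hρDMdef : ρDM = Real.exp (-(Real.log lam * Real.log γ') / (Real.log J - Real.log γ')))
    (hrdef : r = (Real.log (2 * L + 1) - Real.log lam) /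
      (Real.log (2 * L + 1) - Real.log lam - Real.log γ')) :
    1 - η' ≤ L' ∧ 0 < 1 - η' ∧
    η' < lam ∧ lam < 1 ∧ 1 < J ∧ 0 ≤ L ∧
    Real.log (2 * L + 1) / (Real.log (2 * L + 1) - Real.log γ') < r ∧ r < 1 ∧
    max (γ' ^ r * (2 * L + 1) ^ (1 - r)) (lam ^ (1 - r)) = lam ^ (1 - r) ∧
    lam ^ (1 - r) < ρDM := by

  -- Step 1: `1 - η' ≤ L'` via the infimum of `Vbar`.
  have h1η : (0:ℝ) < 1 - η' := by linarith
  obtain ⟨x0⟩ : Nonempty X := inferInstance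
  set m := sInf (Set.range Vbar) with hm
  have hbdd : BddBelow (Set.range Vbar) := ⟨1, by rintro _ ⟨x, rfl⟩; exact hV1 x⟩
  have hne : (Set.range Vbar).Nonempty := ⟨_, ⟨x0, rfl⟩⟩
  have hm1 : 1 ≤ m := le_csInf hne (by rintro _ ⟨x, rfl⟩; exact hV1 x)
  have hkey : ∀ x : X, m ≤ η' * Vbar x + L' := by
    intro x
    have hlb : ∫ y, (m : ℝ) ∂(P x) ≤ ∫ y, Vbar y ∂(P x) :=
      integral_mono (integrable_const m) (hC1int x) (fun y => csInf_le hbdd ⟨y, rfl⟩)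
    have : m ≤ ∫ y, Vbar y ∂(P x) := by simpa using hlb
    exact this.trans (hC1 x)
  have hmain : m ≤ η' * m + L' := by
    refine le_of_forall_pos_le_add fun ε hε => ?_
    obtain ⟨_, ⟨x, rfl⟩, hx⟩ := exists_lt_of_csInf_lt hne (lt_add_of_pos_right m hε)
    have h1 := hkey x
    nlinarith [mul_le_mul_of_nonneg_left hx.le hη'0]
  have hL'ge : 1 - η' ≤ L' := by nlinarith
  have hL'pos : 0 < L' := lt_of_lt_of_le h1η hL'ge
  -- basic quantities
  have hden : (0:ℝ) < 2 * L' + δ' := by linarith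
  have hlamgap : 0 < 2 * L' * (1 - η') / (2 * L' + δ') :=
    div_pos (by nlinarith) hden
  have hη'lam : η' < lam := by rw [hlamdef]; linarith
  have hlam0 : 0 < lam := lt_of_le_of_lt hη'0 hη'lam
  have hlam1 : lam < 1 := by
    have : 2 * L' * (1 - η') / (2 * L' + δ') < 1 - η' := by
      rw [div_lt_iff₀ hden]; nlinarith
    rw [hlamdef]; linarith
  have hF : 2 < (2 * L' + δ') / (1 - η') := by
    rw [lt_div_iff₀ h1η]; linarith
  have hJ1 : 1 < J := by
    have h2 : (0:ℝ) ≤ 2 * L' / lam := div_nonneg (by linarith) hlam0.le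
    rw [hJdef]; linarith
  have hL0 : 0 ≤ L := by rw [hLdef]; linarith
  have h2L1 : (1:ℝ) < 2 * L + 1 := by rw [hLdef]; linarith
  set A := Real.log (2 * L + 1) with hAdef
  set B := Real.log lam with hBdef
  set C := Real.log γ' with hCdef
  have hA : 0 < A := Real.log_pos h2L1
  have hB : B < 0 := Real.log_neg hlam0 hlam1
  have hC : C < 0 := Real.log_neg hγ'0 hγ'1
  have hD : 0 < A - B - C := by linarith
  have hrval : r = (A - B) / (A - B - C) := hrdef
  have hr1 : r < 1 := by rw [hrval, div_lt_one hD]; linarith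
  have hrlow : A / (A - C) < r := by
    rw [hrval, div_lt_div_iff₀ (by linarith) hD]
    nlinarith [mul_pos_of_neg_of_neg hB hC]
  have hexp : C * r + A * (1 - r) = B * (1 - r) := by
    rw [hrval]; field_simp; ring
  have heq : γ' ^ r * (2 * L + 1) ^ (1 - r) = lam ^ (1 - r) := by
    rw [Real.rpow_def_of_pos hγ'0, Real.rpow_def_of_pos (by linarith : (0:ℝ) < 2 * L + 1),
        Real.rpow_def_of_pos hlam0, ← Real.exp_add]
    exact congrArg Real.exp hexp
  -- final strict inequality
  have hJpos : 0 < Real.log J := Real.log_pos hJ1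
  have hK : 0 < Real.log J - C := by linarith
  have hBC : 0 < B * C := mul_pos_of_neg_of_neg hB hC
  set F := (2 * L' + δ') / (1 - η') with hFdef
  have hJlam : J * lam = F * lam + 2 * L' := by
    rw [hJdef]; field_simp
  have hFlam : η' < F * lam := by
    have h1 : 0 < (F - 2) * lam := mul_pos (by linarith) hlam0
    have h2 : F * lam = (F - 2) * lam + 2 * lam := by ring
    linarith
  have hlt : (2 * L + 1) / lam < J := by
    rw [div_lt_iff₀ hlam0, hLdef]
    linarith
  have hAB : A - B < Real.log J := by
    have hABlog : A - B = Real.log ((2 * L + 1) / lam) := by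
      rw [hAdef, hBdef, Real.log_div (by linarith) hlam0.ne']
    rw [hABlog]
    exact Real.log_lt_log (div_pos (by linarith) hlam0) hlt
  have hfrac : B * C / (Real.log J - C) < B * C / (A - B - C) :=
    div_lt_div_of_pos_left hBC hD (by linarith)
  have h1r : 1 - r = -C / (A - B - C) := by
    rw [hrval]
    field_simp
    ring
  have h1rB : (1 - r) * B = -(B * C) / (A - B - C) := by
    rw [h1r]; ring
  have hfin : (1 - r) * B < -(B * C) / (Real.log J - C) := by
    rw [h1rB, neg_div, neg_div]; linarith
  refine ⟨hL'ge, h1η, hη'lam, hlam1, hJ1, hL0, hrlow, hr1,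
    max_eq_right heq.le, ?_⟩
  rw [hρDMdef, Real.rpow_def_of_pos hlam0]
  exact Real.exp_lt_exp.mpr (by rw [mul_comm]; exact hfin)
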